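/- Let d ≥ 1, let Γ be a nonempty set of proper 4-colorings of Q_d, let f be uniformly distributed on Γ, and let u be any vertex with neighborhood N_u. Then T_Γ(u) := (1/d)·H(f_{N_u}) + H(f_u | f(N_u)) ≤ 2 + 4/d. -/

import Mathlib

open Finset

abbrev V (d : ℕ) : Type := Fin d → Bool

def cube (d : ℕ) : SimpleGraph (V d) where
  Adj u v := (Finset.univ.filter fun i => u i ≠ v i).card = 1
  symm := by
    constructor
    intro u v h
    have e : (Finset.univ.filter fun i => v i ≠ u i) = (Finset.univ.filter fun i => u i ≠ v i) := by
      apply Finset.filter_congr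
      intro i _
      exact ne_comm
    rw [e]
    exact h
  loopless := by
    constructor
    intro u h
    simp at h

instance cubeAdjDecidable (d : ℕ) : DecidableRel (cube d).Adj := fun u v =>
  decidable_of_iff ((Finset.univ.filter fun i => u i ≠ v i).card = 1) Iff.rfl

/-- a vertex of the hypercube is even if it has an even number of `true` coordinates. -/
def isEven {d : ℕ} (v : V d) : Prop := Even (Finset.univ.filter fun i => v i = true).card

/-- `f` is a proper `q`-coloring of the `d`-dimensional hypercube. -/
def IsColoring (d q : ℕ) (f : V d → Fin q) : Prop :=
  ∀ u v : V d, (cube d).Adj u v → f u ≠ f v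

open scoped Classical in
/-- The probability that the random variable `X` (on the finite probability space `(Ω, p)`)
takes the value `t`. -/
noncomputable def pr {Ω T : Type*} [Fintype Ω] (p : Ω → ℝ) (X : Ω → T) (t : T) : ℝ :=
  ∑ ω : Ω, if X ω = t then p ω else 0

/-- The binary (Shannon) entropy `H(X) = ∑_t P(X = t) log₂ (1 / P(X = t))`. -/
noncomputable def ent {Ω T : Type*} [Fintype Ω] [Fintype T] (p : Ω → ℝ) (X : Ω → T) : ℝ :=
  ∑ t : T, pr p X t * Real.logb 2 (pr p X t)⁻¹

/-- The conditional entropy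
`H(X | Y) = ∑_u P(Y = u) ∑_t P(X = t | Y = u) log₂ (1 / P(X = t | Y = u))`. -/
noncomputable def condEnt {Ω T U : Type*} [Fintype Ω] [Fintype T] [Fintype U]
    (p : Ω → ℝ) (X : Ω → T) (Y : Ω → U) : ℝ :=
  ∑ u : U, pr p Y u *
    ∑ t : T, (pr p (fun ω => (X ω, Y ω)) (t, u) / pr p Y u) *
      Real.logb 2 ((pr p (fun ω => (X ω, Y ω)) (t, u) / pr p Y u))⁻¹

/-- `T_p(u) = (1/d) H(f_{N_u}) + H(f_u | f(N_u))`, where `f` is a random coloring with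
distribution `p`, `f_{N_u}` is the restriction of `f` to the neighborhood of `u`, and
`f(N_u)` is the set of colors appearing on the neighborhood of `u`. -/
noncomputable def Tp (d : ℕ) (p : (V d → Fin 4) → ℝ) (u : V d) : ℝ :=
  (1 / (d : ℝ)) * ent p (fun f => fun v : {v : V d // (cube d).Adj u v} => f v.1) +
    condEnt p (fun f => f u)
      (fun f => Finset.image (fun v : {v : V d // (cube d).Adj u v} => f v.1) Finset.univ)

/-- The uniform distribution on the finite set `Γ` of colorings. -/
noncomputable def unif (d : ℕ) (Γ : Finset (V d → Fin 4)) : (V d → Fin 4) → ℝ :=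
  fun f => if f ∈ Γ then ((Γ.card : ℝ))⁻¹ else 0

set_option linter.unusedSectionVars false

open scoped Classical

section Helpers

variable {Ω T U : Type*} [Fintype Ω] [Fintype T] [Fintype U]

lemma pr_nonneg (p : Ω → ℝ) (hp : ∀ ω, 0 ≤ p ω) (X : Ω → T) (t : T) : 0 ≤ pr p X t :=
  Finset.sum_nonneg fun ω _ => by by_cases h : X ω = t <;> simp [h, hp ω]

lemma sum_pr (p : Ω → ℝ) (X : Ω → T) : ∑ t, pr p X t = ∑ ω, p ω := by
  unfold pr
  rw [Finset.sum_comm]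
  exact Finset.sum_congr rfl fun ω _ => by simp

lemma pr_fst (p : Ω → ℝ) (X : Ω → T) (Y : Ω → U) (u : U) :
    ∑ t, pr p (fun ω => (X ω, Y ω)) (t, u) = pr p Y u := by
  unfold pr
  rw [Finset.sum_comm]
  refine Finset.sum_congr rfl fun ω _ => ?_
  simp only [Prod.mk.injEq]
  by_cases h : Y ω = u <;> simp [h]

lemma exists_of_pr_ne_zero {p : Ω → ℝ} {X : Ω → T} {t : T} (h : pr p X t ≠ 0) :
    ∃ ω, p ω ≠ 0 ∧ X ω = t := by
  by_contra hc
  push_neg at hc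
  apply h
  apply Finset.sum_eq_zero
  intro ω _
  by_cases hX : X ω = t
  · have : p ω = 0 := by
      by_contra h'
      exact (hc ω h') hX
    simp [hX, this]
  · simp [hX]

lemma le_pr (p : Ω → ℝ) (hp : ∀ ω, 0 ≤ p ω) (X : Ω → T) (ω₀ : Ω) :
    p ω₀ ≤ pr p X (X ω₀) := by
  have := Finset.single_le_sum (f := fun ω => if X ω = X ω₀ then p ω else 0)
    (fun ω _ => by split <;> simp [hp ω]) (Finset.mem_univ ω₀)
  simpa [pr] using this

lemma pr_comp [DecidableEq U] (p : Ω → ℝ) (X : Ω → T) (g : T → U) (s : U) :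
    ∑ x ∈ Finset.univ.filter (fun x => g x = s), pr p X x = pr p (fun ω => g (X ω)) s := by
  unfold pr
  rw [Finset.sum_comm]
  refine Finset.sum_congr rfl fun ω _ => ?_
  rw [Finset.sum_ite_eq]
  simp [Finset.mem_filter]

lemma ent_le_logb_card (q : T → ℝ) (hq : ∀ t, 0 ≤ q t) (hsum : ∑ t, q t = 1)
    (A : Finset T) (hsupp : ∀ t, q t ≠ 0 → t ∈ A) :
    ∑ t, q t * Real.logb 2 (q t)⁻¹ ≤ Real.logb 2 A.card := by
  set B := Finset.univ.filter (fun t => q t ≠ 0) with hB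
  have hBA : B ⊆ A := fun t ht => hsupp t (Finset.mem_filter.mp ht).2
  have hBsum : ∑ t ∈ B, q t = 1 := by
    rw [← hsum]
    apply Finset.sum_subset (Finset.subset_univ B)
    intro t _ ht
    by_contra h
    exact ht (Finset.mem_filter.mpr ⟨Finset.mem_univ t, h⟩)
  have hBne : B.Nonempty := by
    rcases Finset.eq_empty_or_nonempty B with h | h
    · rw [h] at hBsum; simp at hBsum
    · exact h
  have hBcard : (1 : ℝ) ≤ B.card := by exact_mod_cast Finset.card_pos.mpr hBne
  have hAcard : (B.card : ℝ) ≤ A.card := by exact_mod_cast Finset.card_le_card hBA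
  have hn : (0 : ℝ) < A.card := lt_of_lt_of_le (by linarith) hAcard
  have hlog2 : (0 : ℝ) < Real.log 2 := Real.log_pos (by norm_num)
  have hzero : ∑ t, q t * Real.logb 2 (q t)⁻¹ = ∑ t ∈ B, q t * Real.logb 2 (q t)⁻¹ := by
    symm
    apply Finset.sum_subset (Finset.subset_univ B)
    intro t _ ht
    have : q t = 0 := by
      by_contra h
      exact ht (Finset.mem_filter.mpr ⟨Finset.mem_univ t, h⟩)
    simp [this]
  rw [hzero]
  have step : ∀ t ∈ B, q t * Real.logb 2 (q t)⁻¹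
      ≤ q t * Real.logb 2 A.card + ((A.card : ℝ)⁻¹ - q t) / Real.log 2 := by
    intro t ht
    have hqt : 0 < q t :=
      lt_of_le_of_ne (hq t) (Ne.symm (Finset.mem_filter.mp ht).2)
    have h1 : Real.logb 2 (q t)⁻¹ = Real.logb 2 A.card + Real.logb 2 ((A.card : ℝ) * q t)⁻¹ := by
      unfold Real.logb
      rw [Real.log_inv, Real.log_inv, Real.log_mul (ne_of_gt hn) (ne_of_gt hqt)]
      ring
    rw [h1, mul_add]
    have h2 : Real.log (((A.card : ℝ) * q t)⁻¹) ≤ ((A.card : ℝ) * q t)⁻¹ - 1 :=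
      Real.log_le_sub_one_of_pos (by positivity)
    have h4 : q t * Real.log (((A.card : ℝ) * q t)⁻¹) ≤ (A.card : ℝ)⁻¹ - q t := by
      have h5 := mul_le_mul_of_nonneg_left h2 hqt.le
      have heq : q t * (((A.card : ℝ) * q t)⁻¹ - 1) = (A.card : ℝ)⁻¹ - q t := by
        field_simp
      linarith
    have h3 : q t * Real.logb 2 (((A.card : ℝ) * q t)⁻¹)
        ≤ ((A.card : ℝ)⁻¹ - q t) / Real.log 2 := by
      rw [Real.logb, mul_div_assoc']
      exact div_le_div_of_nonneg_right h4 hlog2.le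
    linarith
  calc ∑ t ∈ B, q t * Real.logb 2 (q t)⁻¹
      ≤ ∑ t ∈ B, (q t * Real.logb 2 A.card + ((A.card : ℝ)⁻¹ - q t) / Real.log 2) :=
        Finset.sum_le_sum step
    _ = Real.logb 2 A.card + ((B.card : ℝ) * (A.card : ℝ)⁻¹ - 1) / Real.log 2 := by
        rw [Finset.sum_add_distrib, ← Finset.sum_mul, hBsum, one_mul]
        congr 1
        rw [← Finset.sum_div, Finset.sum_sub_distrib, Finset.sum_const, hBsum]
        simp [nsmul_eq_mul]
    _ ≤ Real.logb 2 A.card := by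
        have h6 : (B.card : ℝ) * (A.card : ℝ)⁻¹ ≤ 1 := by
          rw [← div_eq_mul_inv, div_le_one hn]
          exact hAcard
        have h7 : ((B.card : ℝ) * (A.card : ℝ)⁻¹ - 1) / Real.log 2 ≤ 0 :=
          div_nonpos_of_nonpos_of_nonneg (by linarith) hlog2.le
        linarith

lemma ent_le_group [DecidableEq U] (q : T → ℝ) (hq : ∀ t, 0 ≤ q t) (g : T → U) (c : U → ℝ)
    (hcard : ∀ u, (∑ x ∈ Finset.univ.filter (fun x => g x = u), q x) ≠ 0 →
      Real.logb 2 ((Finset.univ.filter fun x => g x = u ∧ q x ≠ 0).card) ≤ c u) :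
    ∑ t, q t * Real.logb 2 (q t)⁻¹ ≤
      (∑ u, (∑ x ∈ Finset.univ.filter (fun x => g x = u), q x) *
          Real.logb 2 (∑ x ∈ Finset.univ.filter (fun x => g x = u), q x)⁻¹)
      + ∑ u, (∑ x ∈ Finset.univ.filter (fun x => g x = u), q x) * c u := by
  rw [← Finset.sum_fiberwise Finset.univ g (fun t => q t * Real.logb 2 (q t)⁻¹),
    ← Finset.sum_add_distrib]
  apply Finset.sum_le_sum
  intro u _
  set r := ∑ x ∈ Finset.univ.filter (fun x => g x = u), q x with hr
  by_cases hr0 : r = 0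
  · have hz : ∀ x ∈ Finset.univ.filter (fun x => g x = u), q x = 0 := by
      intro x hx
      exact (Finset.sum_eq_zero_iff_of_nonneg (fun y _ => hq y)).mp hr0 x hx
    have hz2 : ∑ x ∈ Finset.univ.filter (fun x => g x = u), q x * Real.logb 2 (q x)⁻¹ = 0 :=
      Finset.sum_eq_zero fun x hx => by rw [hz x hx, zero_mul]
    rw [hz2, hr0]
    simp
  · have hrle : 0 ≤ r := Finset.sum_nonneg fun y _ => hq y
    have hrpos : 0 < r := lt_of_le_of_ne hrle (Ne.symm hr0)
    set q' : T → ℝ := fun x => if g x = u then q x / r else 0 with hq'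
    have hq'nonneg : ∀ t, 0 ≤ q' t := by
      intro t
      rw [hq']
      dsimp only
      split
      · exact div_nonneg (hq t) hrpos.le
      · exact le_refl 0
    have h1 : ∑ t, q' t = 1 := by
      rw [hq']
      rw [← Finset.sum_filter]
      rw [← Finset.sum_div, ← hr, div_self hr0]
    have hsupp : ∀ t, q' t ≠ 0 → t ∈ (Finset.univ.filter fun x => g x = u ∧ q x ≠ 0) := by
      intro t ht
      rw [hq'] at ht
      dsimp only at ht
      by_cases h : g t = u
      · rw [if_pos h] at ht
        refine Finset.mem_filter.mpr ⟨Finset.mem_univ t, h, ?_⟩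
        intro h0
        exact ht (by rw [h0]; simp)
      · rw [if_neg h] at ht; exact absurd rfl ht
    have hA := ent_le_logb_card q' hq'nonneg h1 _ hsupp
    have hA' := hA.trans (hcard u hr0)
    have hsum_eq : ∑ t, q' t * Real.logb 2 (q' t)⁻¹
        = ∑ x ∈ Finset.univ.filter (fun x => g x = u), (q x / r) * Real.logb 2 (q x / r)⁻¹ := by
      rw [Finset.sum_filter]
      refine Finset.sum_congr rfl fun t _ => ?_
      rw [hq']
      dsimp only
      by_cases h : g t = u <;> simp [h]
    have key : ∑ x ∈ Finset.univ.filter (fun x => g x = u), q x * Real.logb 2 (q x)⁻¹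
        = r * Real.logb 2 r⁻¹ + r * ∑ t, q' t * Real.logb 2 (q' t)⁻¹ := by
      rw [hsum_eq]
      have pointwise : ∀ x ∈ Finset.univ.filter (fun x => g x = u),
          q x * Real.logb 2 (q x)⁻¹
          = q x * Real.logb 2 r⁻¹ + r * ((q x / r) * Real.logb 2 (q x / r)⁻¹) := by
        intro x _
        rcases eq_or_lt_of_le (hq x) with h | h
        · simp [← h]
        · have hlogs : Real.logb 2 (q x)⁻¹ = Real.logb 2 r⁻¹ + Real.logb 2 (q x / r)⁻¹ := by
            rw [← Real.logb_mul (by positivity) (by positivity)]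
            congr 1
            field_simp
          rw [hlogs]
          field_simp
      rw [Finset.sum_congr rfl pointwise, Finset.sum_add_distrib, ← Finset.sum_mul, ← hr,
        ← Finset.mul_sum]
    rw [key]
    have h8 := mul_le_mul_of_nonneg_left hA' hrpos.le
    linarith

lemma condEnt_le_sum (p : Ω → ℝ) (hp : ∀ ω, 0 ≤ p ω) (X : Ω → T) (Y : Ω → U) (c : U → ℝ)
    (hcard : ∀ u, pr p Y u ≠ 0 →
      Real.logb 2 ((Finset.univ.filter fun t =>
        pr p (fun ω => (X ω, Y ω)) (t, u) ≠ 0).card) ≤ c u) :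
    condEnt p X Y ≤ ∑ u, pr p Y u * c u := by
  unfold condEnt
  apply Finset.sum_le_sum
  intro u _
  by_cases h0 : pr p Y u = 0
  · simp [h0]
  · have hpos : 0 < pr p Y u := lt_of_le_of_ne (pr_nonneg p hp Y u) (Ne.symm h0)
    set q : T → ℝ := fun t => pr p (fun ω => (X ω, Y ω)) (t, u) / pr p Y u with hqdef
    have hq : ∀ t, 0 ≤ q t := fun t =>
      div_nonneg (pr_nonneg p hp _ _) hpos.le
    have hsum : ∑ t, q t = 1 := by
      rw [hqdef]
      dsimp only
      rw [← Finset.sum_div, pr_fst p X Y u, div_self h0]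
    have hsupp : ∀ t, q t ≠ 0 →
        t ∈ (Finset.univ.filter fun t => pr p (fun ω => (X ω, Y ω)) (t, u) ≠ 0) := by
      intro t ht
      refine Finset.mem_filter.mpr ⟨Finset.mem_univ t, ?_⟩
      intro h
      apply ht
      rw [hqdef]
      dsimp only
      rw [h, zero_div]
    have := (ent_le_logb_card q hq hsum _ hsupp).trans (hcard u h0)
    exact mul_le_mul_of_nonneg_left this hpos.le

end Helpers

lemma card_nbrs_le (d : ℕ) (u : V d) : Fintype.card {v : V d // (cube d).Adj u v} ≤ d := by
  have hex : ∀ v : {v : V d // (cube d).Adj u v},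
      ∃ i, (Finset.univ.filter fun i => u i ≠ v.1 i) = {i} :=
    fun v => Finset.card_eq_one.mp v.2
  choose φ hφ using hex
  have hne : ∀ (v : {v : V d // (cube d).Adj u v}) (j : Fin d), u j ≠ v.1 j ↔ j = φ v := by
    intro v j
    constructor
    · intro h
      have : j ∈ (Finset.univ.filter fun i => u i ≠ v.1 i) := Finset.mem_filter.mpr ⟨Finset.mem_univ j, h⟩
      rw [hφ v] at this
      exact Finset.mem_singleton.mp this
    · intro h
      have : j ∈ ({φ v} : Finset (Fin d)) := by rw [h]; exact Finset.mem_singleton_self _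
      rw [← hφ v] at this
      exact (Finset.mem_filter.mp this).2
  have hinj : Function.Injective φ := by
    intro v w h
    apply Subtype.ext
    funext j
    by_cases hj : j = φ v
    · have h1 : u j ≠ v.1 j := (hne v j).mpr hj
      have h2 : u j ≠ w.1 j := (hne w j).mpr (by rw [hj, h])
      revert h1 h2
      cases v.1 j <;> cases w.1 j <;> cases u j <;> simp
    · have h1 : ¬ (u j ≠ v.1 j) := fun hc => hj ((hne v j).mp hc)
      have h2 : ¬ (u j ≠ w.1 j) := fun hc => hj (by rw [h]; exact (hne w j).mp hc)
      push_neg at h1 h2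
      rw [← h1, ← h2]
  simpa using Fintype.card_le_of_injective φ hinj

lemma exists_nbr (d : ℕ) (hd : 1 ≤ d) (u : V d) : ∃ v, (cube d).Adj u v := by
  refine ⟨fun i => if i = ⟨0, hd⟩ then !u i else u i, ?_⟩
  show (Finset.univ.filter fun i => u i ≠ _).card = 1
  have he : (Finset.univ.filter fun i =>
      u i ≠ (if i = (⟨0, hd⟩ : Fin d) then !u i else u i)) = {(⟨0, hd⟩ : Fin d)} := by
    ext i
    simp only [Finset.mem_filter, Finset.mem_univ, true_and, Finset.mem_singleton]
    by_cases h : i = (⟨0, hd⟩ : Fin d) <;> simp [h]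
  rw [he, Finset.card_singleton]

lemma logb_compl_bound (S : Finset (Fin 4)) :
    Real.logb 2 S.card + Real.logb 2 Sᶜ.card ≤ 2 := by
  have h4 : Sᶜ.card = 4 - S.card := by
    rw [Finset.card_compl]
    simp
  have hle : S.card ≤ 4 := by
    have := Finset.card_le_univ S
    simpa using this
  have hlog3 : Real.logb 2 (3 : ℝ) ≤ 2 := by
    have h34 : Real.logb 2 (3 : ℝ) ≤ Real.logb 2 (4 : ℝ) :=
      Real.logb_le_logb_of_le (by norm_num) (by norm_num) (by norm_num)
    have h4e : Real.logb 2 (4 : ℝ) = 2 := by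
      rw [show (4 : ℝ) = 2 ^ (2 : ℕ) by norm_num, Real.logb_pow, Real.logb_self_eq_one (by norm_num)]
      norm_num
    linarith
  have h2e : Real.logb 2 (2 : ℝ) = 1 := Real.logb_self_eq_one (by norm_num)
  have h4e : Real.logb 2 (4 : ℝ) = 2 := by
    rw [show (4 : ℝ) = 2 ^ (2 : ℕ) by norm_num, Real.logb_pow, Real.logb_self_eq_one (by norm_num)]
    norm_num
  interval_cases h : S.card <;> rw [h4] <;> norm_num <;> simp [Real.logb_zero, h2e, h4e, hlog3]

/-- For `f` uniform on any nonempty set `Γ` of proper 4-colorings and any vertex `u`,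
`T_Γ(u) = (1/d) H(f_{N_u}) + H(f_u | f(N_u)) ≤ 2 + 4/d`. -/
theorem T_le_two (d : ℕ) (hd : 1 ≤ d) (Γ : Finset (V d → Fin 4)) (hne : Γ.Nonempty)
    (hcol : ∀ f ∈ Γ, IsColoring d 4 f) (u : V d) :
    Tp d (unif d Γ) u ≤ 2 + 4 / (d : ℝ) := by
  have hd0 : (0 : ℝ) < d := by exact_mod_cast hd
  set p := unif d Γ with hpdef
  have hp : ∀ f, 0 ≤ p f := by
    intro f
    rw [hpdef]
    unfold unif
    by_cases h : f ∈ Γ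
    · simp only [if_pos h]
      positivity
    · simp [h]
  have hcard0 : (Γ.card : ℝ) ≠ 0 := by
    have := Finset.card_pos.mpr hne
    exact_mod_cast this.ne'
  have hpsum : ∑ f, p f = 1 := by
    rw [hpdef]
    unfold unif
    rw [Finset.sum_ite_mem, Finset.univ_inter, Finset.sum_const, nsmul_eq_mul,
      mul_inv_cancel₀ hcard0]
  have hpmem : ∀ f, p f ≠ 0 → f ∈ Γ := by
    intro f h
    rw [hpdef] at h
    unfold unif at h
    by_contra hf
    simp [hf] at h
  set X : (V d → Fin 4) → ({v : V d // (cube d).Adj u v} → Fin 4) :=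
    fun f => fun v => f v.1 with hX
  set g : ({v : V d // (cube d).Adj u v} → Fin 4) → Finset (Fin 4) :=
    fun x => Finset.image x Finset.univ with hg
  set Z : (V d → Fin 4) → Fin 4 := fun f => f u with hZ
  have hTp : Tp d p u = (1 / (d : ℝ)) * ent p X + condEnt p Z (fun f => g (X f)) := rfl
  set prY : Finset (Fin 4) → ℝ := fun S => pr p (fun f => g (X f)) S with hprY
  -- Step A : bound on ent p X
  have hcardA : ∀ S : Finset (Fin 4),
      (∑ x ∈ Finset.univ.filter (fun x => g x = S), pr p X x) ≠ 0 →
      Real.logb 2 ((Finset.univ.filter fun x => g x = S ∧ pr p X x ≠ 0).card)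
        ≤ (d : ℝ) * Real.logb 2 S.card := by
    intro S hne'
    obtain ⟨x₀, hx₀mem, hx₀⟩ := Finset.exists_ne_zero_of_sum_ne_zero hne'
    have hgx₀ : g x₀ = S := (Finset.mem_filter.mp hx₀mem).2
    obtain ⟨v₀, hv₀⟩ := exists_nbr d hd u
    have hSne : 1 ≤ S.card := by
      apply Finset.card_pos.mpr
      exact ⟨x₀ ⟨v₀, hv₀⟩, by rw [← hgx₀]; exact Finset.mem_image_of_mem _ (Finset.mem_univ _)⟩
    have hSlog : 0 ≤ Real.logb 2 (S.card : ℝ) :=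
      Real.logb_nonneg (by norm_num) (by exact_mod_cast hSne)
    have hsub : (Finset.univ.filter (fun x => g x = S ∧ pr p X x ≠ 0))
        ⊆ Fintype.piFinset (fun _ : {v : V d // (cube d).Adj u v} => S) := by
      intro x hx
      rw [Fintype.mem_piFinset]
      intro v
      have hgx : g x = S := (Finset.mem_filter.mp hx).2.1
      rw [← hgx]
      exact Finset.mem_image_of_mem _ (Finset.mem_univ v)
    have hcardle : (Finset.univ.filter (fun x => g x = S ∧ pr p X x ≠ 0)).card
        ≤ S.card ^ Fintype.card {v : V d // (cube d).Adj u v} := by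
      calc (Finset.univ.filter (fun x => g x = S ∧ pr p X x ≠ 0)).card
          ≤ (Fintype.piFinset (fun _ : {v : V d // (cube d).Adj u v} => S)).card :=
            Finset.card_le_card hsub
        _ = S.card ^ Fintype.card {v : V d // (cube d).Adj u v} := by
            rw [Fintype.card_piFinset]
            simp [Finset.prod_const]
    have hN := card_nbrs_le d u
    have hmain : Real.logb 2 (((Finset.univ.filter
          (fun x => g x = S ∧ pr p X x ≠ 0)).card : ℝ))
        ≤ (Fintype.card {v : V d // (cube d).Adj u v} : ℝ) * Real.logb 2 (S.card : ℝ) := by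
      rcases Nat.eq_zero_or_pos (Finset.univ.filter (fun x => g x = S ∧ pr p X x ≠ 0)).card
        with h | h
      · rw [h]
        simpa using mul_nonneg (Nat.cast_nonneg _) hSlog
      · have h2 := Real.logb_le_logb_of_le (b := 2) (by norm_num)
          (show (0 : ℝ) < ((Finset.univ.filter (fun x => g x = S ∧ pr p X x ≠ 0)).card : ℝ)
            by exact_mod_cast h)
          (show (((Finset.univ.filter (fun x => g x = S ∧ pr p X x ≠ 0)).card : ℝ))
            ≤ ((S.card ^ Fintype.card {v : V d // (cube d).Adj u v} : ℕ) : ℝ)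
            by exact_mod_cast hcardle)
        have hcast : ((S.card ^ Fintype.card {v : V d // (cube d).Adj u v} : ℕ) : ℝ)
            = (S.card : ℝ) ^ Fintype.card {v : V d // (cube d).Adj u v} := by push_cast; ring
        rw [hcast, Real.logb_pow] at h2
        exact h2
    refine hmain.trans ?_
    apply mul_le_mul_of_nonneg_right _ hSlog
    exact_mod_cast hN
  have hentX : ent p X ≤
      (∑ S, prY S * Real.logb 2 (prY S)⁻¹)
        + ∑ S, prY S * ((d : ℝ) * Real.logb 2 (S.card : ℝ)) := by
    have hG := ent_le_group (fun x => pr p X x) (pr_nonneg p hp X) g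
      (fun S => (d : ℝ) * Real.logb 2 (S.card : ℝ)) hcardA
    simp only [pr_comp p X g] at hG
    exact hG
  -- Step B : entropy of Y
  have hHY : (∑ S, prY S * Real.logb 2 (prY S)⁻¹) ≤ 4 := by
    have hB := ent_le_logb_card (fun S => prY S) (fun S => pr_nonneg p hp _ S)
      (by rw [hprY]; dsimp only; rw [sum_pr, hpsum]) Finset.univ (fun _ _ => Finset.mem_univ _)
    have hc : (((Finset.univ : Finset (Finset (Fin 4)))).card : ℝ) = 16 := by
      rw [Finset.card_univ, Fintype.card_finset]
      norm_num
    rw [hc] at hB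
    have h16 : Real.logb 2 (16 : ℝ) = 4 := by
      rw [show (16 : ℝ) = 2 ^ (4 : ℕ) by norm_num, Real.logb_pow,
        Real.logb_self_eq_one (by norm_num)]
      norm_num
    linarith
  -- Step C : conditional entropy bound
  have hCE : condEnt p Z (fun f => g (X f)) ≤
      ∑ S, prY S * Real.logb 2 ((Sᶜ : Finset (Fin 4)).card : ℝ) := by
    apply condEnt_le_sum p hp Z (fun f => g (X f))
      (fun S => Real.logb 2 ((Sᶜ : Finset (Fin 4)).card : ℝ))
    intro S hS
    obtain ⟨f₀, hf₀p, hf₀Y⟩ := exists_of_pr_ne_zero hS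
    have hf₀Γ : f₀ ∈ Γ := hpmem f₀ hf₀p
    have hsub : (Finset.univ.filter fun t =>
        pr p (fun f => (Z f, g (X f))) (t, S) ≠ 0) ⊆ Sᶜ := by
      intro t ht
      have ht' := (Finset.mem_filter.mp ht).2
      obtain ⟨f, hfp, hfeq⟩ := exists_of_pr_ne_zero ht'
      have hfΓ := hpmem f hfp
      have h1 : Z f = t := congrArg Prod.fst hfeq
      have h2 : g (X f) = S := congrArg Prod.snd hfeq
      rw [Finset.mem_compl]
      intro htS
      rw [← h2] at htS
      obtain ⟨v, _, hv⟩ := Finset.mem_image.mp htS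
      exact hcol f hfΓ u v.1 v.2 (h1.trans hv.symm)
    have ht₀ : (f₀ u) ∈ (Finset.univ.filter fun t =>
        pr p (fun f => (Z f, g (X f))) (t, S) ≠ 0) := by
      refine Finset.mem_filter.mpr ⟨Finset.mem_univ _, ?_⟩
      have hle := le_pr p hp (fun f => (Z f, g (X f))) f₀
      have heq : (Z f₀, g (X f₀)) = (f₀ u, S) := by
        rw [hf₀Y]
      rw [heq] at hle
      intro h0
      rw [h0] at hle
      have hppos : 0 < p f₀ := lt_of_le_of_ne (hp f₀) (Ne.symm hf₀p)
      linarith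
    have h1c : 0 < (Finset.univ.filter fun t =>
        pr p (fun f => (Z f, g (X f))) (t, S) ≠ 0).card :=
      Finset.card_pos.mpr ⟨_, ht₀⟩
    exact Real.logb_le_logb_of_le (by norm_num) (by exact_mod_cast h1c)
      (by exact_mod_cast Finset.card_le_card hsub)
  -- Step D : combine
  have hsum2 : ∑ S, prY S * (Real.logb 2 (S.card : ℝ) + Real.logb 2 ((Sᶜ : Finset (Fin 4)).card : ℝ)) ≤ 2 := by
    calc ∑ S, prY S * (Real.logb 2 (S.card : ℝ) + Real.logb 2 ((Sᶜ : Finset (Fin 4)).card : ℝ))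
        ≤ ∑ S, prY S * 2 :=
          Finset.sum_le_sum fun S _ =>
            mul_le_mul_of_nonneg_left (logb_compl_bound S) (pr_nonneg p hp _ S)
      _ = 2 := by
          rw [← Finset.sum_mul]
          rw [hprY]
          dsimp only
          rw [sum_pr, hpsum, one_mul]
  have hsplit : ∑ S, prY S * (Real.logb 2 (S.card : ℝ) + Real.logb 2 ((Sᶜ : Finset (Fin 4)).card : ℝ))
      = (∑ S, prY S * Real.logb 2 (S.card : ℝ))
        + ∑ S, prY S * Real.logb 2 ((Sᶜ : Finset (Fin 4)).card : ℝ) := by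
    rw [← Finset.sum_add_distrib]
    exact Finset.sum_congr rfl fun S _ => by ring
  have e2 : (1 / (d : ℝ)) * (∑ S, prY S * ((d : ℝ) * Real.logb 2 (S.card : ℝ)))
      = ∑ S, prY S * Real.logb 2 (S.card : ℝ) := by
    rw [Finset.mul_sum]
    refine Finset.sum_congr rfl fun S _ => ?_
    field_simp
  have hdinv : 0 < 1 / (d : ℝ) := by positivity
  have e1 : (1 / (d : ℝ)) * ent p X
      ≤ (1 / (d : ℝ)) * ((∑ S, prY S * Real.logb 2 (prY S)⁻¹)
          + ∑ S, prY S * ((d : ℝ) * Real.logb 2 (S.card : ℝ))) :=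
    mul_le_mul_of_nonneg_left hentX hdinv.le
  rw [mul_add, e2] at e1
  have e3 : (1 / (d : ℝ)) * (∑ S, prY S * Real.logb 2 (prY S)⁻¹) ≤ (1 / (d : ℝ)) * 4 :=
    mul_le_mul_of_nonneg_left hHY hdinv.le
  have e4 : (1 / (d : ℝ)) * 4 = 4 / (d : ℝ) := by ring
  rw [hTp]
  linarith
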